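/- arXiv:1302.6496 — 7 statements merged into one kernel-verified Lean document; each statement's English description precedes it below -/
import Mathlib

section
/- For every natural number n ≥ 1 and every real ζ > 1, one has cosh²β · cosh²(γ − δ) = cosh²δ, where β, γ, δ are the unique nonnegative reals satisfying cosh²β = (nζ + 1)/(n + 1), cosh²γ = ((n + 1)ζ²)/(nζ + 1), and cosh²δ = ((n + 1)ζ + 1)/(n + 2). -/
set_option maxHeartbeats 1000000

theorem stmt_0 (n : ℕ) (hn : 1 ≤ n) (ζ β γ δ : ℝ) (hζ : 1 < ζ)
    (hβ : 0 ≤ β) (hγ : 0 ≤ γ) (hδ : 0 ≤ δ)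
    (h1 : Real.cosh β ^ 2 = ((n : ℝ) * ζ + 1) / ((n : ℝ) + 1))
    (h2 : Real.cosh γ ^ 2 = (((n : ℝ) + 1) * ζ ^ 2) / ((n : ℝ) * ζ + 1))
    (h3 : Real.cosh δ ^ 2 = (((n : ℝ) + 1) * ζ + 1) / ((n : ℝ) + 2)) :
    Real.cosh β ^ 2 * Real.cosh (γ - δ) ^ 2 = Real.cosh δ ^ 2 := by
  set N : ℝ := (n : ℝ) with hN
  have hN1 : (1:ℝ) ≤ N := by exact_mod_cast Nat.one_le_cast.mpr hn
  have hd1 : (0:ℝ) < N * ζ + 1 := by nlinarith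
  have hd2 : (0:ℝ) < N + 1 := by linarith
  have hd3 : (0:ℝ) < N + 2 := by linarith
  have hsγ : Real.sinh γ ^ 2 = ((N + 1) * ζ ^ 2) / (N * ζ + 1) - 1 := by
    rw [Real.sinh_sq, h2]
  have hsδ : Real.sinh δ ^ 2 = ((N + 1) * ζ + 1) / (N + 2) - 1 := by
    rw [Real.sinh_sq, h3]
  have hsγ0 : 0 ≤ Real.sinh γ := Real.sinh_nonneg_iff.2 hγ
  have hsδ0 : 0 ≤ Real.sinh δ := Real.sinh_nonneg_iff.2 hδ
  have hcγ0 : 0 ≤ Real.cosh γ := (Real.cosh_pos γ).le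
  have hcδ0 : 0 ≤ Real.cosh δ := (Real.cosh_pos δ).le
  set P : ℝ := Real.cosh γ * Real.cosh δ * Real.sinh γ * Real.sinh δ with hP
  set E : ℝ := (N + 1) * ζ * (ζ - 1) * ((N + 1) * ζ + 1) / ((N * ζ + 1) * (N + 2))
    with hE
  have hE0 : 0 ≤ E := by
    apply div_nonneg
    · have : 0 < ζ - 1 := by linarith
      positivity
    · positivity
  have hP0 : 0 ≤ P := by positivity
  have hP2 : P ^ 2 = E ^ 2 := by
    have : P ^ 2 = Real.cosh γ ^ 2 * Real.cosh δ ^ 2 * Real.sinh γ ^ 2 *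
        Real.sinh δ ^ 2 := by rw [hP]; ring
    rw [this, h2, h3, hsγ, hsδ, hE]
    field_simp
    ring
  have hPE : P = E := by nlinarith
  rw [Real.cosh_sub]
  have expand : (Real.cosh γ * Real.cosh δ - Real.sinh γ * Real.sinh δ) ^ 2 =
      Real.cosh γ ^ 2 * Real.cosh δ ^ 2 + Real.sinh γ ^ 2 * Real.sinh δ ^ 2
        - 2 * P := by rw [hP]; ring
  rw [expand, hPE, hsγ, hsδ, h1, h2, h3, hE]
  field_simp
  ring
end

section
/- For every natural number n ≥ 1 and real ζ > 1, if γ, δ ≥ 0 satisfy cosh²γ = ((n+1)ζ²)/(nζ+1) and cosh²δ = ((n+1)ζ+1)/(n+2), then cosh²(γ − δ) = ((n + 1)(nζ + ζ + 1))/((nζ + 1)(n + 2)). -/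
set_option maxHeartbeats 1000000 in
theorem stmt_4 (n : ℕ) (hn : 1 ≤ n) (ζ γ δ : ℝ) (hζ : 1 < ζ)
    (hγ : 0 ≤ γ) (hδ : 0 ≤ δ)
    (h2 : Real.cosh γ ^ 2 = (((n : ℝ) + 1) * ζ ^ 2) / ((n : ℝ) * ζ + 1))
    (h3 : Real.cosh δ ^ 2 = (((n : ℝ) + 1) * ζ + 1) / ((n : ℝ) + 2)) :
    Real.cosh (γ - δ) ^ 2 =
      (((n : ℝ) + 1) * ((n : ℝ) * ζ + ζ + 1)) / (((n : ℝ) * ζ + 1) * ((n : ℝ) + 2)) := by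
  have hn1 : (1 : ℝ) ≤ (n : ℝ) := by exact_mod_cast hn
  have ha : (0 : ℝ) < (n : ℝ) * ζ + 1 := by nlinarith
  have hb : (0 : ℝ) < (n : ℝ) + 2 := by nlinarith
  have hsγ : Real.sinh γ ^ 2 = Real.cosh γ ^ 2 - 1 := by
    have := Real.cosh_sq γ; linarith
  have hsδ : Real.sinh δ ^ 2 = Real.cosh δ ^ 2 - 1 := by
    have := Real.cosh_sq δ; linarith
  set P := Real.cosh γ * Real.cosh δ * (Real.sinh γ * Real.sinh δ) with hPdef
  set E := ((n : ℝ) + 1) * ζ * (ζ - 1) * (((n : ℝ) + 1) * ζ + 1) /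
      (((n : ℝ) * ζ + 1) * ((n : ℝ) + 2)) with hEdef
  have hPsq : P ^ 2 = E ^ 2 := by
    have : P ^ 2 = Real.cosh γ ^ 2 * Real.cosh δ ^ 2 *
        (Real.sinh γ ^ 2 * Real.sinh δ ^ 2) := by ring
    rw [this, hsγ, hsδ, h2, h3, hEdef]
    field_simp
    ring
  have hPnn : 0 ≤ P := by
    have := Real.cosh_pos γ
    have := Real.cosh_pos δ
    have h1 : 0 ≤ Real.sinh γ := by
      rw [← Real.sinh_zero]; exact Real.sinh_le_sinh.2 hγ
    have h2 : 0 ≤ Real.sinh δ := by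
      rw [← Real.sinh_zero]; exact Real.sinh_le_sinh.2 hδ
    positivity
  have hEnn : 0 ≤ E := by
    apply div_nonneg
    · have hA : (0:ℝ) ≤ (n : ℝ) + 1 := by linarith
      have hB : (0:ℝ) ≤ ζ := by linarith
      have hC : (0:ℝ) ≤ ζ - 1 := by linarith
      have hD : (0:ℝ) ≤ ((n : ℝ) + 1) * ζ + 1 := by nlinarith
      exact mul_nonneg (mul_nonneg (mul_nonneg hA hB) hC) hD
    · nlinarith
  have hPE : P = E := by nlinarith [sq_nonneg (P - E), sq_nonneg (P + E)]
  have hc : Real.cosh (γ - δ) = Real.cosh γ * Real.cosh δ - Real.sinh γ * Real.sinh δ :=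
    Real.cosh_sub γ δ
  have : Real.cosh (γ - δ) ^ 2 = Real.cosh γ ^ 2 * Real.cosh δ ^ 2 +
      Real.sinh γ ^ 2 * Real.sinh δ ^ 2 - 2 * P := by
    rw [hc]; ring
  rw [this, hsγ, hsδ, h2, h3, hPE, hEdef]
  field_simp
  ring
end

section
/- For every natural number n ≥ 3 and real a > 0, there exist λ > 0 and a sequence α : {0,1,…,n+1} → ℝ such that α₀ = α_{n+1} = 0, α₁ = α_n = 1, α_j > 0 for all 1 < j < n, and for every 1 ≤ j ≤ n one has λ·α_j = α_{j−1} + α_{j+1} + 2/(n − 1 + 1/cosh a). -/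
open Real Filter Set Topology

private lemma cosh_sub_cosh' (p q : ℝ) :
    Real.cosh p - Real.cosh q = 2 * Real.sinh ((p + q) / 2) * Real.sinh ((p - q) / 2) := by
  have h1 := Real.cosh_add ((p + q) / 2) ((p - q) / 2)
  have h2 := Real.cosh_sub ((p + q) / 2) ((p - q) / 2)
  have e1 : (p + q) / 2 + (p - q) / 2 = p := by ring
  have e2 : (p + q) / 2 - (p - q) / 2 = q := by ring
  rw [e1] at h1; rw [e2] at h2; linarith

set_option maxHeartbeats 1000000 in
theorem stmt_6 (n : ℕ) (hn : 3 ≤ n) (a : ℝ) (ha : 0 < a) :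
    ∃ lam : ℝ, 0 < lam ∧ ∃ α : ℕ → ℝ,
      α 0 = 0 ∧ α (n + 1) = 0 ∧ α 1 = 1 ∧ α n = 1 ∧
      (∀ j : ℕ, 1 < j → j < n → 0 < α j) ∧
      (∀ j : ℕ, 1 ≤ j → j ≤ n →
        lam * α j = α (j - 1) + α (j + 1) + 2 / ((n : ℝ) - 1 + 1 / Real.cosh a)) := by
  have hn3 : (3 : ℝ) ≤ (n : ℝ) := by exact_mod_cast hn
  set c : ℝ := 2 / ((n : ℝ) - 1 + 1 / Real.cosh a) with hcdef
  have hcosh1 : 1 < Real.cosh a := Real.one_lt_cosh.mpr (ne_of_gt ha)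
  have hcoshpos : (0 : ℝ) < Real.cosh a := Real.cosh_pos a
  have hinv1 : 1 / Real.cosh a < 1 := by
    rw [div_lt_one hcoshpos]; exact hcosh1
  have hinvpos : 0 < 1 / Real.cosh a := by positivity
  have hdenpos : 0 < (n : ℝ) - 1 + 1 / Real.cosh a := by linarith
  have hden2 : (2 : ℝ) < (n : ℝ) - 1 + 1 / Real.cosh a := by linarith
  have hdenn : (n : ℝ) - 1 + 1 / Real.cosh a < (n : ℝ) := by linarith
  have hcpos : 0 < c := by rw [hcdef]; positivity
  have hc1 : c < 1 := by rw [hcdef, div_lt_one hdenpos]; linarith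
  have hnpos : (0 : ℝ) < (n : ℝ) := by linarith
  have hcn : 2 < c * n := by
    have : 2 / (n : ℝ) < c := by
      rw [hcdef]
      exact div_lt_div_of_pos_left (by norm_num) hdenpos hdenn
    calc (2 : ℝ) = 2 / (n : ℝ) * n := by field_simp
    _ < c * n := by exact mul_lt_mul_of_pos_right this hnpos
  -- the function whose zero we seek
  set H : ℝ → ℝ := fun s =>
    2 * Real.sinh (s / 2) * Real.cosh (((n : ℝ) + 1) * s / 2) - c * Real.sinh ((n : ℝ) * s / 2)
    with hHdef
  have hH0 : H 0 = 0 := by simp [hHdef]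
  -- derivative of H at 0 is 1 - c * n / 2 < 0
  have d1 : HasDerivAt (fun s : ℝ => s / 2) (1 / 2) 0 := (hasDerivAt_id 0).div_const 2
  have d2 : HasDerivAt (fun s : ℝ => Real.sinh (s / 2)) (1 / 2) 0 := by
    simpa using d1.sinh
  have d3 : HasDerivAt (fun s : ℝ => ((n : ℝ) + 1) * s / 2) (((n : ℝ) + 1) / 2) 0 := by
    simpa using ((hasDerivAt_id 0).const_mul ((n : ℝ) + 1)).div_const 2
  have d4 : HasDerivAt (fun s : ℝ => Real.cosh (((n : ℝ) + 1) * s / 2)) 0 0 := by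
    simpa using d3.cosh
  have d5 : HasDerivAt (fun s : ℝ => (n : ℝ) * s / 2) ((n : ℝ) / 2) 0 := by
    simpa using ((hasDerivAt_id 0).const_mul (n : ℝ)).div_const 2
  have d6 : HasDerivAt (fun s : ℝ => Real.sinh ((n : ℝ) * s / 2)) ((n : ℝ) / 2) 0 := by
    simpa using d5.sinh
  have dH : HasDerivAt H (1 - c * ((n : ℝ) / 2)) 0 := by
    have := ((d2.const_mul 2).mul d4).sub (d6.const_mul c)
    simp at this
    exact this
  have hderivneg : 1 - c * ((n : ℝ) / 2) < 0 := by linarith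
  -- find a small s₁ > 0 with H s₁ < 0
  have hslope : Tendsto (slope H 0) (𝓝[≠] (0 : ℝ)) (𝓝 (1 - c * ((n : ℝ) / 2))) :=
    hasDerivAt_iff_tendsto_slope.mp dH
  have hev : ∀ᶠ s in 𝓝[≠] (0 : ℝ), slope H 0 s < 0 :=
    hslope.eventually_lt_const hderivneg
  have hev' : ∀ᶠ s in 𝓝[>] (0 : ℝ), slope H 0 s < 0 :=
    hev.filter_mono (nhdsWithin_mono 0 (fun x hx => ne_of_gt hx))
  have hev2 : ∀ᶠ s in 𝓝[>] (0 : ℝ), s < 2 :=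
    (eventually_lt_nhds (by norm_num : (0:ℝ) < 2)).filter_mono nhdsWithin_le_nhds
  obtain ⟨s₁, hs₁slope, hs₁lt2, hs₁pos⟩ :=
    (hev'.and (hev2.and self_mem_nhdsWithin)).exists
  have hs₁pos : (0 : ℝ) < s₁ := hs₁pos
  have hHs₁ : H s₁ < 0 := by
    have h := hs₁slope
    rw [slope_def_field] at h
    have hdiv : (H s₁ - H 0) / (s₁ - 0) < 0 := h
    rw [hH0, sub_zero, sub_zero] at hdiv
    rcases div_neg_iff.mp hdiv with ⟨_, h2⟩ | ⟨h1, _⟩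
    · linarith
    · exact h1
  -- H 2 > 0
  have hH2 : 0 < H 2 := by
    have e1 : ((2 : ℝ) / 2) = 1 := by norm_num
    have e2 : (((n : ℝ) + 1) * 2 / 2) = (n : ℝ) + 1 := by ring
    have e3 : ((n : ℝ) * 2 / 2) = (n : ℝ) := by ring
    have hsinh1 : 1 < Real.sinh 1 := Real.self_lt_sinh_iff.mpr (by norm_num)
    have hsinhn : 0 < Real.sinh (n : ℝ) := Real.sinh_pos_iff.mpr hnpos
    have hsc : Real.sinh (n : ℝ) < Real.cosh (n : ℝ) := by
      have := Real.cosh_sub_sinh (n : ℝ)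
      have : (0:ℝ) < Real.exp (-(n:ℝ)) := Real.exp_pos _
      linarith [Real.cosh_sub_sinh (n : ℝ)]
    have hcc : Real.cosh (n : ℝ) ≤ Real.cosh ((n : ℝ) + 1) := by
      rw [Real.cosh_le_cosh]
      rw [abs_of_nonneg (by linarith), abs_of_nonneg (by linarith)]
      linarith
    have hcpos' : 0 < Real.cosh ((n : ℝ) + 1) := Real.cosh_pos _
    rw [hHdef]
    simp only [e1, e2, e3]
    nlinarith [hsinhn, hsc, hcc, hcpos', hsinh1, hc1, hcpos]
  -- intermediate value theorem
  have hcont : Continuous H := by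
    rw [hHdef]; fun_prop
  have h0mem : (0 : ℝ) ∈ Icc (H s₁) (H 2) := ⟨le_of_lt hHs₁, le_of_lt hH2⟩
  obtain ⟨s, hsmem, hHs⟩ :=
    intermediate_value_Icc (le_of_lt hs₁lt2) hcont.continuousOn h0mem
  have hspos : 0 < s := lt_of_lt_of_le hs₁pos hsmem.1
  have hkey : 2 * Real.sinh (s / 2) * Real.cosh (((n : ℝ) + 1) * s / 2)
      = c * Real.sinh ((n : ℝ) * s / 2) := by
    have : H s = 0 := hHs
    rw [hHdef] at this
    linarith [this]
  -- construction
  set m : ℝ := ((n : ℝ) + 1) / 2 with hmdef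
  have hm2 : (2 : ℝ) ≤ m := by rw [hmdef]; linarith
  set lam : ℝ := 2 * Real.cosh s with hlamdef
  set A : ℝ := Real.cosh (s * m) - Real.cosh (s * (m - 1)) with hAdef
  have hAeq : A = 2 * Real.sinh ((n : ℝ) * s / 2) * Real.sinh (s / 2) := by
    rw [hAdef, cosh_sub_cosh']
    have e1 : (s * m + s * (m - 1)) / 2 = (n : ℝ) * s / 2 := by rw [hmdef]; ring
    have e2 : (s * m - s * (m - 1)) / 2 = s / 2 := by ring
    rw [e1, e2]
  have hApos : 0 < A := by
    rw [hAeq]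
    have h1 : 0 < Real.sinh ((n : ℝ) * s / 2) := Real.sinh_pos_iff.mpr (by positivity)
    have h2 : 0 < Real.sinh (s / 2) := Real.sinh_pos_iff.mpr (by positivity)
    positivity
  have hAne : A ≠ 0 := ne_of_gt hApos
  -- key identity : (lam - 2) * cosh (s*m) = c * A
  have hl2 : lam - 2 = 4 * Real.sinh (s / 2) ^ 2 := by
    have h1 : Real.cosh s = Real.cosh (s / 2 + s / 2) := by norm_num
    rw [hlamdef, h1, Real.cosh_add]
    have := Real.cosh_sq (s / 2)
    nlinarith [this]
  have hsm : s * m = ((n : ℝ) + 1) * s / 2 := by rw [hmdef]; ring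
  have hkey2 : (lam - 2) * Real.cosh (s * m) = c * A := by
    rw [hl2, hAeq, hsm]
    linear_combination (2 * Real.sinh (s / 2)) * hkey
  refine ⟨lam, by rw [hlamdef]; positivity,
    fun j => (Real.cosh (s * m) - Real.cosh (s * ((j : ℝ) - m))) / A, ?_, ?_, ?_, ?_, ?_, ?_⟩
  · -- α 0 = 0
    show (Real.cosh (s * m) - Real.cosh (s * (((0:ℕ) : ℝ) - m))) / A = 0
    have : s * (((0 : ℕ) : ℝ) - m) = -(s * m) := by push_cast; ring
    rw [this, Real.cosh_neg, sub_self, zero_div]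
  · -- α (n+1) = 0
    show (Real.cosh (s * m) - Real.cosh (s * (((n+1:ℕ) : ℝ) - m))) / A = 0
    have : s * (((n + 1 : ℕ) : ℝ) - m) = s * m := by push_cast; rw [hmdef]; ring
    rw [this, sub_self, zero_div]
  · -- α 1 = 1
    show (Real.cosh (s * m) - Real.cosh (s * (((1:ℕ) : ℝ) - m))) / A = 1
    have : s * (((1 : ℕ) : ℝ) - m) = -(s * (m - 1)) := by push_cast; ring
    rw [this, Real.cosh_neg, ← hAdef, div_self hAne]
  · -- α n = 1
    show (Real.cosh (s * m) - Real.cosh (s * (((n:ℕ) : ℝ) - m))) / A = 1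
    have : s * (((n : ℕ) : ℝ) - m) = s * (m - 1) := by rw [hmdef]; ring
    rw [this, ← hAdef, div_self hAne]
  · -- positivity
    intro j hj1 hjn
    have hj1' : (1 : ℝ) < (j : ℝ) := by exact_mod_cast hj1
    have hjn' : (j : ℝ) < (n : ℝ) := by exact_mod_cast hjn
    show 0 < (Real.cosh (s * m) - Real.cosh (s * ((j : ℝ) - m))) / A
    have hnum : 0 < Real.cosh (s * m) - Real.cosh (s * ((j : ℝ) - m)) := by
      rw [cosh_sub_cosh']
      have e1 : (s * m + s * ((j : ℝ) - m)) / 2 = s * (j : ℝ) / 2 := by ring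
      have e2 : (s * m - s * ((j : ℝ) - m)) / 2 = s * (2 * m - (j : ℝ)) / 2 := by ring
      rw [e1, e2]
      have h1 : 0 < Real.sinh (s * (j : ℝ) / 2) := Real.sinh_pos_iff.mpr (by positivity)
      have h2 : 0 < Real.sinh (s * (2 * m - (j : ℝ)) / 2) := by
        apply Real.sinh_pos_iff.mpr
        have : (j : ℝ) < 2 * m := by rw [hmdef]; linarith
        have h2m : 0 < 2 * m - (j : ℝ) := by linarith
        positivity
      positivity
    exact div_pos hnum hApos
  · -- the recurrence
    intro j hj1 hjn
    have hcast : ((j - 1 : ℕ) : ℝ) = (j : ℝ) - 1 := by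
      have := Nat.cast_sub hj1 (R := ℝ); simpa using this
    show lam * ((Real.cosh (s * m) - Real.cosh (s * ((j : ℝ) - m))) / A)
      = (Real.cosh (s * m) - Real.cosh (s * (((j - 1 : ℕ) : ℝ) - m))) / A
      + (Real.cosh (s * m) - Real.cosh (s * (((j + 1 : ℕ) : ℝ) - m))) / A + c
    rw [hcast]
    push_cast
    rw [← add_div, div_add' _ _ _ hAne, ← mul_div_assoc, div_eq_div_iff hAne hAne]
    have e1 : s * ((j : ℝ) - 1 - m) = s * ((j : ℝ) - m) - s := by ring
    have e2 : s * ((j : ℝ) + 1 - m) = s * ((j : ℝ) - m) + s := by ring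
    rw [e1, e2, Real.cosh_sub, Real.cosh_add]
    rw [hlamdef] at hkey2 ⊢
    linear_combination A * hkey2
end

section
/- For n ≥ 3 a natural number and a > 0 real, define h : (0,∞) → ℝ by h(x) = (x^{(n−1)/2} + x^{−(n−1)/2})/(x^{(n+1)/2} + x^{−(n+1)/2}) and g : [1,∞) → ℝ by g(y) = h(y + √(y² − 1)) − 1 + (y − 1)(n − 1 + 1/cosh a). Then there exists y₀ > 1 with g(y₀) = 0. -/
noncomputable def hfun (n : ℕ) (x : ℝ) : ℝ :=
  (x ^ (((n : ℝ) - 1) / 2) + x ^ (-(((n : ℝ) - 1) / 2))) /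
    (x ^ (((n : ℝ) + 1) / 2) + x ^ (-(((n : ℝ) + 1) / 2)))

noncomputable def gfun (n : ℕ) (a y : ℝ) : ℝ :=
  hfun n (y + Real.sqrt (y ^ 2 - 1)) - 1 + (y - 1) * ((n : ℝ) - 1 + 1 / Real.cosh a)

private theorem sinh_nat_mul_ge (x : ℝ) (hx : 0 ≤ x) :
    ∀ k : ℕ, (k : ℝ) * Real.sinh x ≤ Real.sinh ((k : ℝ) * x) := by
  intro k
  induction k with
  | zero => simp
  | succ k ih =>
    have h1 : Real.sinh (((k : ℝ) + 1) * x)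
        = Real.sinh ((k : ℝ) * x) * Real.cosh x + Real.cosh ((k:ℝ)*x) * Real.sinh x := by
      rw [add_mul, one_mul, Real.sinh_add]
    have h2 : 0 ≤ Real.sinh ((k:ℝ)*x) := by positivity
    have h3 : 1 ≤ Real.cosh x := Real.one_le_cosh x
    have h4 : 1 ≤ Real.cosh ((k:ℝ)*x) := Real.one_le_cosh _
    have h5 : 0 ≤ Real.sinh x := by positivity
    push_cast
    rw [h1]
    nlinarith

theorem stmt_10 (n : ℕ) (hn : 3 ≤ n) (a : ℝ) (ha : 0 < a) :
    ∃ y₀ : ℝ, 1 < y₀ ∧ gfun n a y₀ = 0 := by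
  set c : ℝ := (n : ℝ) - 1 + 1 / Real.cosh a with hc_def
  have hcosha : 1 < Real.cosh a := Real.one_lt_cosh.mpr ha.ne'
  have hn3 : (3 : ℝ) ≤ (n : ℝ) := by exact_mod_cast hn
  have hc_pos : 0 < c := by
    have : 0 < 1 / Real.cosh a := by positivity
    simp only [hc_def]; nlinarith
  have hc_lt : c < (n : ℝ) := by
    have h1 : 1 / Real.cosh a < 1 := by
      rw [div_lt_one (by positivity)]; exact hcosha
    simp only [hc_def]; linarith
  -- find small t > 0 with cosh(((n+1)/2) * t) < n / c
  have hratio : 1 < (n : ℝ) / c := (one_lt_div hc_pos).mpr hc_lt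
  have hev : ∀ᶠ x : ℝ in nhds 0,
      Real.cosh ((((n : ℝ) + 1) / 2) * x) < (n : ℝ) / c := by
    have hcont : ContinuousAt (fun x : ℝ => Real.cosh ((((n : ℝ) + 1) / 2) * x)) 0 := by
      fun_prop
    have := hcont.eventually_lt (continuousAt_const (y := (n : ℝ) / c)) (by simpa using hratio)
    simpa using this
  obtain ⟨ε, hε, hball⟩ := Metric.eventually_nhds_iff.mp hev
  set t : ℝ := ε / 2 with ht_def
  have ht : 0 < t := by positivity
  have htb : Real.cosh ((((n : ℝ) + 1) / 2) * t) < (n : ℝ) / c := by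
    apply hball
    rw [Real.dist_eq, sub_zero, abs_of_pos ht]
    simp only [ht_def]; linarith
  set y₁ : ℝ := Real.cosh t with hy₁_def
  have hy₁ : 1 < y₁ := Real.one_lt_cosh.mpr ht.ne'
  -- gfun at y₁ is negative
  have hsinh : 0 < Real.sinh t := by positivity
  have hsqrt : Real.sqrt (y₁ ^ 2 - 1) = Real.sinh t := by
    have : y₁ ^ 2 - 1 = Real.sinh t ^ 2 := by rw [hy₁_def, Real.cosh_sq]; ring
    rw [this, Real.sqrt_sq hsinh.le]
  have hxe : y₁ + Real.sqrt (y₁ ^ 2 - 1) = Real.exp t := by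
    rw [hsqrt, hy₁_def, Real.cosh_add_sinh]
  set A : ℝ := (n : ℝ) * t / 2 with hA_def
  set B : ℝ := t / 2 with hB_def
  have hB : 0 < B := by positivity
  have hsB : 0 < Real.sinh B := by positivity
  have hexp : ∀ p : ℝ, Real.exp t ^ p = Real.exp (t * p) := fun p => (Real.exp_mul t p).symm
  have hhf : hfun n (Real.exp t) = Real.cosh (A - B) / Real.cosh (A + B) := by
    unfold hfun
    rw [hexp, hexp, hexp, hexp]
    have e1 : t * (((n : ℝ) - 1) / 2) = A - B := by rw [hA_def, hB_def]; ring
    have e2 : t * (-(((n : ℝ) - 1) / 2)) = -(A - B) := by rw [hA_def, hB_def]; ring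
    have e3 : t * (((n : ℝ) + 1) / 2) = A + B := by rw [hA_def, hB_def]; ring
    have e4 : t * (-(((n : ℝ) + 1) / 2)) = -(A + B) := by rw [hA_def, hB_def]; ring
    rw [e1, e2, e3, e4, Real.cosh_eq, Real.cosh_eq]
    have hd : 0 < Real.exp (A + B) + Real.exp (-(A + B)) := by positivity
    field_simp
  have hcoshAB : Real.cosh (A + B) = Real.cosh ((((n : ℝ) + 1) / 2) * t) := by
    congr 1; rw [hA_def, hB_def]; ring
  have hAB_pos : 0 < Real.cosh (A + B) := by positivity
  have hABlt : c * Real.cosh (A + B) < (n : ℝ) := by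
    rw [hcoshAB]
    calc c * Real.cosh ((((n : ℝ) + 1) / 2) * t) < c * ((n : ℝ) / c) :=
          (mul_lt_mul_iff_right₀ hc_pos).mpr htb
      _ = (n : ℝ) := by field_simp
  have hsinhA : (n : ℝ) * Real.sinh B ≤ Real.sinh A := by
    have := sinh_nat_mul_ge B hB.le n
    have hAeq : (n : ℝ) * B = A := by rw [hA_def, hB_def]; ring
    rwa [hAeq] at this
  have hy₁m1 : y₁ - 1 = 2 * Real.sinh B ^ 2 := by
    have h2B : t = 2 * B := by rw [hB_def]; ring
    rw [hy₁_def, h2B, Real.cosh_two_mul, Real.cosh_sq]; ring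
  have hgneg : gfun n a y₁ < 0 := by
    unfold gfun
    rw [hxe, hhf, ← hc_def]
    have key : Real.cosh (A - B) <
        (1 - (y₁ - 1) * c) * Real.cosh (A + B) := by
      rw [Real.cosh_sub, Real.cosh_add, hy₁m1]
      have h1 : Real.sinh B * (c * (Real.cosh A * Real.cosh B + Real.sinh A * Real.sinh B))
          < Real.sinh B * (n : ℝ) := by
        rw [Real.cosh_add] at hABlt
        exact (mul_lt_mul_iff_right₀ hsB).mpr hABlt
      nlinarith [mul_pos hsB hsB]
    have := (div_lt_iff₀ hAB_pos).mpr key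
    linarith
  -- gfun at y₂ is positive
  set y₂ : ℝ := y₁ + 1 + 1 / c with hy₂_def
  have hinvc : 0 < 1 / c := by positivity
  have hy₁₂ : y₁ ≤ y₂ := by simp only [hy₂_def]; linarith
  have hy₂gt : 1 < y₂ := by simp only [hy₂_def]; linarith
  have hgpos : 0 < gfun n a y₂ := by
    have hy₂pos : 0 < y₂ + Real.sqrt (y₂ ^ 2 - 1) := by
      have hs : 0 ≤ Real.sqrt (y₂ ^ 2 - 1) := Real.sqrt_nonneg _
      linarith
    have hhpos : 0 < hfun n (y₂ + Real.sqrt (y₂ ^ 2 - 1)) := by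
      unfold hfun
      have h1 := Real.rpow_pos_of_pos hy₂pos (((n : ℝ) - 1) / 2)
      have h2 := Real.rpow_pos_of_pos hy₂pos (-(((n : ℝ) - 1) / 2))
      have h3 := Real.rpow_pos_of_pos hy₂pos (((n : ℝ) + 1) / 2)
      have h4 := Real.rpow_pos_of_pos hy₂pos (-(((n : ℝ) + 1) / 2))
      positivity
    have hterm : 1 ≤ (y₂ - 1) * c := by
      have h1 : 1 / c ≤ y₂ - 1 := by simp only [hy₂_def]; linarith
      calc (1 : ℝ) = (1 / c) * c := by field_simp
        _ ≤ (y₂ - 1) * c := mul_le_mul_of_nonneg_right h1 hc_pos.le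
    unfold gfun
    rw [← hc_def]
    linarith
  -- continuity on [y₁, y₂]
  have hbase : ∀ y ∈ Set.Icc y₁ y₂, y + Real.sqrt (y ^ 2 - 1) ≠ 0 := by
    intro y hy
    have hs : 0 ≤ Real.sqrt (y ^ 2 - 1) := Real.sqrt_nonneg _
    have h0 : 1 < y := lt_of_lt_of_le hy₁ hy.1
    exact ne_of_gt (by linarith)
  have hcb : ContinuousOn (fun y : ℝ => y + Real.sqrt (y ^ 2 - 1)) (Set.Icc y₁ y₂) := by
    fun_prop
  have hcont : ContinuousOn (gfun n a) (Set.Icc y₁ y₂) := by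
    unfold gfun hfun
    apply ContinuousOn.add
    apply ContinuousOn.sub _ continuousOn_const
    apply ContinuousOn.div
    · exact (hcb.rpow_const (fun y hy => Or.inl (hbase y hy))).add
        (hcb.rpow_const (fun y hy => Or.inl (hbase y hy)))
    · exact (hcb.rpow_const (fun y hy => Or.inl (hbase y hy))).add
        (hcb.rpow_const (fun y hy => Or.inl (hbase y hy)))
    · intro y hy
      have h0 : 1 < y := lt_of_lt_of_le hy₁ hy.1
      have hpos : 0 < y + Real.sqrt (y ^ 2 - 1) := by
        have hs : 0 ≤ Real.sqrt (y ^ 2 - 1) := Real.sqrt_nonneg _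
        linarith
      have h3 := Real.rpow_pos_of_pos hpos (((n : ℝ) + 1) / 2)
      have h4 := Real.rpow_pos_of_pos hpos (-(((n : ℝ) + 1) / 2))
      positivity
    · exact (continuousOn_id.sub continuousOn_const).mul continuousOn_const
  have h0mem : (0 : ℝ) ∈ Set.Icc (gfun n a y₁) (gfun n a y₂) := ⟨hgneg.le, hgpos.le⟩
  obtain ⟨y₀, hy₀mem, hy₀⟩ := intermediate_value_Icc hy₁₂ hcont h0mem
  exact ⟨y₀, lt_of_lt_of_le hy₁ hy₀mem.1, hy₀⟩
end

section
/- For n ≥ 3 a natural number and a > 0 real, with h(x) = (x^{(n−1)/2} + x^{−(n−1)/2})/(x^{(n+1)/2} + x^{−(n+1)/2}) and g(y) = h(y + √(y² − 1)) − 1 + (y − 1)(n − 1 + 1/cosh a), the right derivative of g at y = 1 equals 1/cosh a − 1, which is negative. -/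
open Real Filter Set

set_option maxHeartbeats 1000000 in
lemma slope_identity (n : ℕ) (C y : ℝ) (hy : 1 < y) :
    hfun n (y + Real.sqrt (y ^ 2 - 1)) - 1 + (y - 1) * C =
      (y - 1) * (-(Real.sinh ((n:ℝ) * Real.log (y + Real.sqrt (y ^ 2 - 1)) / 2) /
        (Real.sinh (Real.log (y + Real.sqrt (y ^ 2 - 1)) / 2) *
          Real.cosh (((n:ℝ)+1)/2 * Real.log (y + Real.sqrt (y ^ 2 - 1))))) + C) := by
  set s := Real.sqrt (y ^ 2 - 1) with hs
  have hs0 : 0 ≤ s := Real.sqrt_nonneg _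
  have hssq : s ^ 2 = y ^ 2 - 1 := Real.sq_sqrt (by nlinarith)
  set x := y + s with hxdef
  have hx1 : 1 < x := by nlinarith
  have hx0 : 0 < x := by linarith
  set L := Real.log x with hL
  have hLpos : 0 < L := Real.log_pos hx1
  have hxe : Real.exp L = x := Real.exp_log hx0
  have hprod : x * (y - s) = 1 := by nlinarith
  have hinv : Real.exp (-L) = y - s := by
    rw [Real.exp_neg, hxe]; exact inv_eq_of_mul_eq_one_right hprod
  set A := Real.exp ((n:ℝ) * L / 2) with hA
  set B := Real.exp (L / 2) with hB
  have hApos : 0 < A := Real.exp_pos _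
  have hBpos : 0 < B := Real.exp_pos _
  have hB1 : 1 < B := by rw [hB]; simpa using Real.exp_lt_exp.mpr (by linarith : (0:ℝ) < L/2)
  -- rpow rewrites
  have e1 : x ^ (((n : ℝ) - 1) / 2) = A / B := by
    rw [Real.rpow_def_of_pos hx0, ← hL, show L * (((n:ℝ)-1)/2) = (n:ℝ)*L/2 - L/2 by ring,
      Real.exp_sub]
  have e2 : x ^ (-(((n : ℝ) - 1) / 2)) = B / A := by
    rw [Real.rpow_def_of_pos hx0, ← hL, show L * (-(((n:ℝ)-1)/2)) = L/2 - (n:ℝ)*L/2 by ring,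
      Real.exp_sub]
  have e3 : x ^ (((n : ℝ) + 1) / 2) = A * B := by
    rw [Real.rpow_def_of_pos hx0, ← hL, show L * (((n:ℝ)+1)/2) = (n:ℝ)*L/2 + L/2 by ring,
      Real.exp_add]
  have e4 : x ^ (-(((n : ℝ) + 1) / 2)) = A⁻¹ * B⁻¹ := by
    rw [Real.rpow_def_of_pos hx0, ← hL,
      show L * (-(((n:ℝ)+1)/2)) = -((n:ℝ)*L/2) + -(L/2) by ring,
      Real.exp_add, Real.exp_neg, Real.exp_neg]
  have e5 : Real.sinh ((n:ℝ) * L / 2) = (A - A⁻¹) / 2 := by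
    rw [Real.sinh_eq, Real.exp_neg]
  have e6 : Real.sinh (L / 2) = (B - B⁻¹) / 2 := by
    rw [Real.sinh_eq, Real.exp_neg]
  have e7 : Real.cosh (((n:ℝ)+1)/2 * L) = (A * B + (A * B)⁻¹) / 2 := by
    rw [show ((n:ℝ)+1)/2 * L = (n:ℝ)*L/2 + L/2 by ring, Real.cosh_eq, Real.exp_add,
      Real.exp_neg, Real.exp_add]
  have eB2 : x = B * B := by rw [← hxe, hB, ← Real.exp_add]; ring_nf
  have eB2' : y - s = B⁻¹ * B⁻¹ := by
    rw [← hinv, hB, ← Real.exp_neg, ← Real.exp_add]; ring_nf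
  have hyB : y = (B * B + B⁻¹ * B⁻¹) / 2 := by
    have := eB2; have := eB2'; rw [hxdef] at eB2; linarith
  have hBne : B - B⁻¹ ≠ 0 := by
    have : B⁻¹ < 1 := by rw [inv_lt_one_iff₀]; right; exact hB1
    nlinarith
  have hDne : A * B + (A * B)⁻¹ ≠ 0 := by positivity
  rw [hfun, e1, e2, e3, e4, e5, e6, e7, hyB]
  clear_value A B
  clear hxe hinv eB2 eB2' hprod e1 e2 e3 e4 e5 e6 e7
  have hA0 : A ≠ 0 := hApos.ne'
  have hB0 : B ≠ 0 := hBpos.ne'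
  have hP : A^2*B^2+1 ≠ 0 := by positivity
  have hB2 : B^2 - 1 ≠ 0 := by nlinarith
  have d1 : A*B + A⁻¹*B⁻¹ = (A^2*B^2+1)/(A*B) := by field_simp
  have d2 : A*B + (A*B)⁻¹ = (A^2*B^2+1)/(A*B) := by field_simp
  have d3 : A/B + B/A = (A^2+B^2)/(A*B) := by field_simp
  have d4 : A - A⁻¹ = (A^2-1)/A := by field_simp
  have d5 : B - B⁻¹ = (B^2-1)/B := by field_simp
  have d6 : B*B + B⁻¹*B⁻¹ = (B^4+1)/B^2 := by field_simp
  rw [d1, d2, d3, d4, d5, d6]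
  field_simp
  ring

lemma lim_sinh_div : Filter.Tendsto (fun t : ℝ => Real.sinh t / t) (nhdsWithin 0 {(0:ℝ)}ᶜ) (nhds 1) := by
  have h := hasDerivAt_iff_tendsto_slope.mp (Real.hasDerivAt_sinh 0)
  rw [Real.cosh_zero] at h
  refine h.congr' ?_
  filter_upwards [self_mem_nhdsWithin] with t ht
  simp [slope_def_field, Real.sinh_zero]

lemma lim_sinh_div_c (c : ℝ) (hc : c ≠ 0) :
    Filter.Tendsto (fun L : ℝ => Real.sinh (c * L) / (c * L)) (nhdsWithin 0 {(0:ℝ)}ᶜ) (nhds 1) := by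
  apply lim_sinh_div.comp
  apply tendsto_nhdsWithin_of_tendsto_nhds_of_eventually_within
  · have : Filter.Tendsto (fun L : ℝ => c * L) (nhds 0) (nhds (c * 0)) :=
      (continuous_const.mul continuous_id).tendsto 0
    simpa using this.mono_left nhdsWithin_le_nhds
  · filter_upwards [self_mem_nhdsWithin] with L hL
    simp only [mem_compl_iff, mem_singleton_iff] at *
    exact mul_ne_zero hc hL

lemma lim_main (n : ℕ) (hn : 3 ≤ n) (C : ℝ) :
    Filter.Tendsto (fun L : ℝ => -(Real.sinh ((n:ℝ) * L / 2) /
      (Real.sinh (L / 2) * Real.cosh (((n:ℝ)+1)/2 * L))) + C)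
      (nhdsWithin 0 {(0:ℝ)}ᶜ) (nhds (-(n:ℝ) + C)) := by
  have hn0 : (n:ℝ) ≠ 0 := by
    have : 0 < n := by omega
    exact_mod_cast this.ne'
  have t1 := lim_sinh_div_c ((n:ℝ)/2) (by simpa using hn0)
  have t2 := lim_sinh_div_c (1/2 : ℝ) (by norm_num)
  have t2' := t2.inv₀ (by norm_num)
  have t3 : Filter.Tendsto (fun L : ℝ => Real.cosh (((n:ℝ)+1)/2 * L))
      (nhdsWithin 0 {(0:ℝ)}ᶜ) (nhds 1) := by
    have : Filter.Tendsto (fun L : ℝ => Real.cosh (((n:ℝ)+1)/2 * L)) (nhds 0)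
        (nhds (Real.cosh (((n:ℝ)+1)/2 * 0))) :=
      (Real.continuous_cosh.comp (continuous_const.mul continuous_id)).tendsto 0
    simpa using this.mono_left nhdsWithin_le_nhds
  have t3' := t3.inv₀ (by norm_num)
  have tprod := ((t1.mul t2').mul t3').mul (tendsto_const_nhds (x := (n:ℝ)))
  have tneg := ((tprod.neg).add (tendsto_const_nhds (x := C)))
  have hval : -(1 * (1:ℝ)⁻¹ * 1⁻¹ * (n:ℝ)) + C = -(n:ℝ) + C := by norm_num
  rw [hval] at tneg
  refine tneg.congr' ?_
  filter_upwards [self_mem_nhdsWithin] with L hL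
  have hL0 : L ≠ 0 := hL
  have e1 : (n:ℝ)/2*L = (n:ℝ)*L/2 := by ring
  have e2 : (1/2:ℝ)*L = L/2 := by ring
  simp only [e1, e2]
  have hs : Real.sinh (L/2) ≠ 0 := by
    rw [Real.sinh_ne_zero]
    intro h; exact hL0 (by linarith)
  have hc : Real.cosh (((n:ℝ)+1)/2 * L) ≠ 0 := (Real.cosh_pos _).ne'
  have hL2 : L/2 ≠ 0 := by intro h; exact hL0 (by linarith)
  have hnL : (n:ℝ)*L/2 ≠ 0 := by
    intro h
    rcases mul_eq_zero.mp (by linarith : (n:ℝ)*L = 0) with h'|h'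
    · exact hn0 h'
    · exact hL0 h'
  field_simp

lemma gfun_one (n : ℕ) (a : ℝ) : gfun n a 1 = 0 := by
  simp [gfun, hfun]

lemma log_tendsto (hh : True) :
    Filter.Tendsto (fun y : ℝ => Real.log (y + Real.sqrt (y ^ 2 - 1)))
      (nhdsWithin 1 (Set.Ioi 1)) (nhdsWithin 0 {(0:ℝ)}ᶜ) := by
  apply tendsto_nhdsWithin_of_tendsto_nhds_of_eventually_within
  · have hc : Continuous fun y : ℝ => y + Real.sqrt (y ^ 2 - 1) := by
      continuity
    have h1 : Filter.Tendsto (fun y : ℝ => y + Real.sqrt (y ^ 2 - 1)) (nhds 1)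
        (nhds (1 + Real.sqrt (1 ^ 2 - 1))) := hc.tendsto 1
    have h1' : (1:ℝ) + Real.sqrt (1 ^ 2 - 1) = 1 := by norm_num
    rw [h1'] at h1
    have h2 := (Real.continuousAt_log (by norm_num : (1:ℝ) ≠ 0)).tendsto
    rw [Real.log_one] at h2
    exact (h2.comp h1).mono_left nhdsWithin_le_nhds
  · filter_upwards [self_mem_nhdsWithin] with y hy
    have hy1 : 1 < y := hy
    have hx1 : 1 < y + Real.sqrt (y ^ 2 - 1) :=
      lt_of_lt_of_le hy1 (le_add_of_nonneg_right (Real.sqrt_nonneg _))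
    exact (Real.log_pos hx1).ne'

theorem stmt_11 (n : ℕ) (hn : 3 ≤ n) (a : ℝ) (ha : 0 < a) :
    HasDerivWithinAt (gfun n a) (1 / Real.cosh a - 1) (Set.Ici (1 : ℝ)) 1 ∧
      1 / Real.cosh a - 1 < 0 := by
  constructor
  · set C : ℝ := (n : ℝ) - 1 + 1 / Real.cosh a with hC
    rw [hasDerivWithinAt_iff_tendsto_slope, Set.Ici_sdiff_left]
    have hmain := (lim_main n hn C).comp (log_tendsto trivial)
    have hval : -(n:ℝ) + C = 1 / Real.cosh a - 1 := by rw [hC]; ring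
    rw [hval] at hmain
    refine hmain.congr' ?_
    filter_upwards [self_mem_nhdsWithin] with y hy
    have hy1 : 1 < y := hy
    have hkey := slope_identity n C y hy1
    have hslope : slope (gfun n a) 1 y = gfun n a y / (y - 1) := by
      rw [slope_def_field, gfun_one, sub_zero]
    simp only [Function.comp]
    rw [hslope]
    rw [show gfun n a y = hfun n (y + Real.sqrt (y ^ 2 - 1)) - 1 + (y - 1) * C from rfl, hkey]
    rw [mul_div_cancel_left₀ _ (by intro h; rw [sub_eq_zero] at h; exact absurd h.symm hy1.ne : y - (1:ℝ) ≠ 0)]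
  · have h1 : 1 / Real.cosh a < 1 := by
      rw [div_lt_one (Real.cosh_pos a)]
      exact Real.one_lt_cosh.mpr ha.ne'
    linarith
end

section
/- For every x > 1 and natural number n ≥ 1, the derivative of h(x) = (x^{(n−1)/2} + x^{−(n−1)/2})/(x^{(n+1)/2} + x^{−(n+1)/2}) satisfies h'(x) = (x − x⁻¹)·(−(∑_{j=1}^{n} x^{n−2j}) − n·x⁻¹)/(x^{(n+1)/2} + x^{−(n+1)/2})²; in particular h'(x) < 0 for x > 1. -/
lemma telesum (n : ℕ) (x : ℝ) (hx0 : 0 < x) :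
    (x - x⁻¹) * ∑ j ∈ Finset.Icc 1 n, x ^ ((n : ℝ) - 2 * (j : ℝ)) =
      x ^ ((n : ℝ) - 1) - x ^ (-(n : ℝ) - 1) := by
  have mulr : ∀ p q : ℝ, x ^ p * x ^ q = x ^ (p + q) := fun p q => (Real.rpow_add hx0 p q).symm
  have hx1 : ∀ p : ℝ, x * x ^ p = x ^ (1 + p) := fun p => by
    rw [Real.rpow_add hx0 1 p, Real.rpow_one]
  have hinv : x⁻¹ = x ^ (-1 : ℝ) := (Real.rpow_neg_one x).symm
  rw [Finset.mul_sum, ← Finset.Ico_add_one_right_eq_Icc, Finset.sum_Ico_eq_sum_range]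
  have : ∀ i ∈ Finset.range (n + 1 - 1),
      (x - x⁻¹) * x ^ ((n : ℝ) - 2 * ((1 + i : ℕ) : ℝ)) =
        (fun i : ℕ => x ^ ((n : ℝ) - 2 * (i : ℝ) - 1)) i
          - (fun i : ℕ => x ^ ((n : ℝ) - 2 * (i : ℝ) - 1)) (i + 1) := by
    intro i _
    simp only [sub_mul, hinv, mulr, hx1, Nat.cast_add, Nat.cast_one]
    rw [show (1 : ℝ) + ((n : ℝ) - 2 * (1 + (i:ℝ))) = (n : ℝ) - 2 * (i:ℝ) - 1 by ring,
        show (-1 : ℝ) + ((n : ℝ) - 2 * (1 + (i:ℝ))) = (n : ℝ) - 2 * ((i:ℝ) + 1) - 1 by ring]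
  rw [Finset.sum_congr rfl this, Finset.sum_range_sub']
  simp only [Nat.cast_zero, Nat.add_sub_cancel]
  rw [show (n:ℝ) - 2 * (n:ℝ) - 1 = -(n:ℝ) - 1 by ring]
  norm_num

theorem stmt_13 (n : ℕ) (hn : 1 ≤ n) (x : ℝ) (hx : 1 < x) :
    HasDerivAt (hfun n)
      ((x - x⁻¹) * (-(∑ j ∈ Finset.Icc 1 n, x ^ ((n : ℝ) - 2 * (j : ℝ))) - (n : ℝ) * x⁻¹) /
        (x ^ (((n : ℝ) + 1) / 2) + x ^ (-(((n : ℝ) + 1) / 2))) ^ 2) x ∧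
    (x - x⁻¹) * (-(∑ j ∈ Finset.Icc 1 n, x ^ ((n : ℝ) - 2 * (j : ℝ))) - (n : ℝ) * x⁻¹) /
        (x ^ (((n : ℝ) + 1) / 2) + x ^ (-(((n : ℝ) + 1) / 2))) ^ 2 < 0 := by
  have hx0 : 0 < x := lt_trans one_pos hx
  have mulr : ∀ p q : ℝ, x ^ p * x ^ q = x ^ (p + q) := fun p q => (Real.rpow_add hx0 p q).symm
  have hinv : x⁻¹ = x ^ (-1 : ℝ) := (Real.rpow_neg_one x).symm
  have hD0 : (0:ℝ) < x ^ (((n : ℝ) + 1) / 2) + x ^ (-(((n : ℝ) + 1) / 2)) := by positivity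
  constructor
  · have hNa : HasDerivAt (fun y : ℝ => y ^ (((n : ℝ) - 1) / 2))
        ((((n : ℝ) - 1) / 2) * x ^ ((((n : ℝ) - 1) / 2) - 1)) x :=
      Real.hasDerivAt_rpow_const (Or.inl hx0.ne')
    have hNb : HasDerivAt (fun y : ℝ => y ^ (-(((n : ℝ) - 1) / 2)))
        ((-(((n : ℝ) - 1) / 2)) * x ^ ((-(((n : ℝ) - 1) / 2)) - 1)) x :=
      Real.hasDerivAt_rpow_const (Or.inl hx0.ne')
    have hDa : HasDerivAt (fun y : ℝ => y ^ (((n : ℝ) + 1) / 2))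
        ((((n : ℝ) + 1) / 2) * x ^ ((((n : ℝ) + 1) / 2) - 1)) x :=
      Real.hasDerivAt_rpow_const (Or.inl hx0.ne')
    have hDb : HasDerivAt (fun y : ℝ => y ^ (-(((n : ℝ) + 1) / 2)))
        ((-(((n : ℝ) + 1) / 2)) * x ^ ((-(((n : ℝ) + 1) / 2)) - 1)) x :=
      Real.hasDerivAt_rpow_const (Or.inl hx0.ne')
    have hdiv := (hNa.add hNb).div (hDa.add hDb) (ne_of_gt hD0)
    have keynum :
        ((((n : ℝ) - 1) / 2) * x ^ ((((n : ℝ) - 1) / 2) - 1)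
            + (-(((n : ℝ) - 1) / 2)) * x ^ ((-(((n : ℝ) - 1) / 2)) - 1))
          * (x ^ (((n : ℝ) + 1) / 2) + x ^ (-(((n : ℝ) + 1) / 2)))
        - (x ^ (((n : ℝ) - 1) / 2) + x ^ (-(((n : ℝ) - 1) / 2)))
          * ((((n : ℝ) + 1) / 2) * x ^ ((((n : ℝ) + 1) / 2) - 1)
            + (-(((n : ℝ) + 1) / 2)) * x ^ ((-(((n : ℝ) + 1) / 2)) - 1))
        = (x - x⁻¹) * (-(∑ j ∈ Finset.Icc 1 n, x ^ ((n : ℝ) - 2 * (j : ℝ))) - (n : ℝ) * x⁻¹) := by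
      have hrhs : (x - x⁻¹) * (-(∑ j ∈ Finset.Icc 1 n, x ^ ((n : ℝ) - 2 * (j : ℝ))) - (n : ℝ) * x⁻¹)
          = -(x ^ ((n : ℝ) - 1) - x ^ (-(n : ℝ) - 1)) - (n : ℝ) * (1 - x ^ (-2 : ℝ)) := by
        have h2 : (x - x⁻¹) * x⁻¹ = 1 - x ^ (-2 : ℝ) := by
          have hx1 : x * x ^ (-1 : ℝ) = 1 := by
            rw [Real.rpow_neg_one]; exact mul_inv_cancel₀ hx0.ne'
          rw [sub_mul, hinv, mulr, hx1]; norm_num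
        rw [mul_sub, mul_neg, telesum n x hx0, ← mul_assoc, mul_comm (x - x⁻¹) (n : ℝ),
          mul_assoc, h2]
      rw [hrhs]
      set a : ℝ := ((n : ℝ) - 1) / 2 with ha
      set b : ℝ := ((n : ℝ) + 1) / 2 with hb
      have e1 : x ^ (a - 1) * x ^ b = x ^ ((n : ℝ) - 1) := by
        rw [mulr]; congr 1; rw [ha, hb]; ring
      have e2 : x ^ (a - 1) * x ^ (-b) = x ^ (-2 : ℝ) := by
        rw [mulr]; congr 1; rw [ha, hb]; ring
      have e3 : x ^ (-a - 1) * x ^ b = 1 := by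
        rw [mulr, show -a - 1 + b = 0 by rw [ha, hb]; ring, Real.rpow_zero]
      have e4 : x ^ (-a - 1) * x ^ (-b) = x ^ (-(n : ℝ) - 1) := by
        rw [mulr]; congr 1; rw [ha, hb]; ring
      have e5 : x ^ a * x ^ (b - 1) = x ^ ((n : ℝ) - 1) := by
        rw [mulr]; congr 1; rw [ha, hb]; ring
      have e6 : x ^ a * x ^ (-b - 1) = x ^ (-2 : ℝ) := by
        rw [mulr]; congr 1; rw [ha, hb]; ring
      have e7 : x ^ (-a) * x ^ (b - 1) = 1 := by
        rw [mulr, show -a + (b - 1) = 0 by rw [ha, hb]; ring, Real.rpow_zero]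
      have e8 : x ^ (-a) * x ^ (-b - 1) = x ^ (-(n : ℝ) - 1) := by
        rw [mulr]; congr 1; rw [ha, hb]; ring
      calc (a * x ^ (a - 1) + -a * x ^ (-a - 1)) * (x ^ b + x ^ (-b))
            - (x ^ a + x ^ (-a)) * (b * x ^ (b - 1) + -b * x ^ (-b - 1))
          = a * (x ^ (a-1) * x ^ b) + a * (x ^ (a-1) * x ^ (-b))
              - a * (x ^ (-a-1) * x ^ b) - a * (x ^ (-a-1) * x ^ (-b))
              - b * (x ^ a * x ^ (b-1)) + b * (x ^ a * x ^ (-b-1))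
              - b * (x ^ (-a) * x ^ (b-1)) + b * (x ^ (-a) * x ^ (-b-1)) := by ring
        _ = a * x ^ ((n:ℝ)-1) + a * x ^ (-2:ℝ) - a * 1 - a * x ^ (-(n:ℝ)-1)
              - b * x ^ ((n:ℝ)-1) + b * x ^ (-2:ℝ) - b * 1 + b * x ^ (-(n:ℝ)-1) := by
            rw [e1, e2, e3, e4, e5, e6, e7, e8]
        _ = -(x ^ ((n : ℝ) - 1) - x ^ (-(n : ℝ) - 1)) - (n : ℝ) * (1 - x ^ (-2 : ℝ)) := by
            rw [ha, hb]; ring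
    have hgoal := hdiv
    simp only [Pi.add_apply] at hgoal
    rw [keynum] at hgoal
    exact hgoal
  · apply div_neg_of_neg_of_pos
    · apply mul_neg_of_pos_of_neg
      · have : x⁻¹ < 1 := inv_lt_one_of_one_lt₀ hx
        linarith
      · have hsum : 0 < ∑ j ∈ Finset.Icc 1 n, x ^ ((n : ℝ) - 2 * (j : ℝ)) := by
          apply Finset.sum_pos
          · intro j _; positivity
          · exact Finset.nonempty_Icc.mpr hn
        have : 0 < (n : ℝ) * x⁻¹ := by positivity
        linarith
    · positivity
end

section
/- In the hyperbolic plane ℍ², for a regular triangle (all three pairwise distances equal to a > 0) with vertices V₀, V₁, V₂ and circumcenter C (the unique point equidistant from all vertices), the squared hyperbolic cosine of the distance from each vertex to C equals (2·cosh a + 1)/3. -/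
/-- Inverse hyperbolic cosine. -/
noncomputable def arcosh (x : ℝ) : ℝ :=
  Real.log (x + Real.sqrt (x ^ 2 - 1))

/-- The Minkowski bilinear form on ℝ^{n+1}: signature (-,+,…,+). -/
def mink (n : ℕ) (x y : Fin (n + 1) → ℝ) : ℝ :=
  (∑ i : Fin n, x i.succ * y i.succ) - x 0 * y 0

/-- The hyperboloid model of n-dimensional hyperbolic space. -/
def Hyperboloid (n : ℕ) : Type :=
  {x : Fin (n + 1) → ℝ // mink n x x = -1 ∧ 0 < x 0}

/-- Hyperbolic distance in the hyperboloid model. -/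
noncomputable def hdist {n : ℕ} (X Y : Hyperboloid n) : ℝ :=
  arcosh (-(mink n X.1 Y.1))

lemma mink_two (x y : Fin 3 → ℝ) :
    mink 2 x y = x 1 * y 1 + x 2 * y 2 - x 0 * y 0 := by
  simp [mink, Fin.sum_univ_two]

lemma cosh_arcosh {u : ℝ} (hu : 1 ≤ u) : Real.cosh (arcosh u) = u := by
  have h1 : (0:ℝ) ≤ u ^ 2 - 1 := by nlinarith
  have hs : Real.sqrt (u ^ 2 - 1) ^ 2 = u ^ 2 - 1 := Real.sq_sqrt h1
  have hsnn : 0 ≤ Real.sqrt (u ^ 2 - 1) := Real.sqrt_nonneg _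
  have hv : 0 < u + Real.sqrt (u ^ 2 - 1) := by linarith
  rw [arcosh, Real.cosh_eq, Real.exp_log hv, ← Real.log_inv, Real.exp_log (by positivity)]
  field_simp
  nlinarith [hs]

lemma one_le_neg_mink (X Y : Hyperboloid 2) : 1 ≤ -(mink 2 X.1 Y.1) := by
  obtain ⟨x, hx, hx0⟩ := X
  obtain ⟨y, hy, hy0⟩ := Y
  rw [mink_two] at *
  simp only at *
  nlinarith [sq_nonneg (x 1 - y 1), sq_nonneg (x 2 - y 2), sq_nonneg (x 1 * y 2 - x 2 * y 1),
    mul_pos hx0 hy0, sq_nonneg (x 0 * y 0 + 1 + x 1 * y 1 + x 2 * y 2)]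

lemma cosh_hdist (X Y : Hyperboloid 2) : Real.cosh (hdist X Y) = -(mink 2 X.1 Y.1) :=
  cosh_arcosh (one_le_neg_mink X Y)

lemma mink_symm (x y : Fin 3 → ℝ) : mink 2 x y = mink 2 y x := by
  rw [mink_two, mink_two]; ring

theorem stmt_14 (a : ℝ) (ha : 0 < a) (V₀ V₁ V₂ C : Hyperboloid 2)
    (h01 : hdist V₀ V₁ = a) (h02 : hdist V₀ V₂ = a) (h12 : hdist V₁ V₂ = a)
    (hC0 : hdist C V₀ = hdist C V₁) (hC1 : hdist C V₁ = hdist C V₂) :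
    Real.cosh (hdist V₀ C) ^ 2 = (2 * Real.cosh a + 1) / 3 ∧
    Real.cosh (hdist V₁ C) ^ 2 = (2 * Real.cosh a + 1) / 3 ∧
    Real.cosh (hdist V₂ C) ^ 2 = (2 * Real.cosh a + 1) / 3 := by
  set k := Real.cosh a with hk
  have hk1 : 1 < k := Real.one_lt_cosh.mpr (ne_of_gt ha)
  have e01 : mink 2 V₀.1 V₁.1 = -k := by
    have := cosh_hdist V₀ V₁; rw [h01] at this; linarith
  have e02 : mink 2 V₀.1 V₂.1 = -k := by
    have := cosh_hdist V₀ V₂; rw [h02] at this; linarith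
  have e12 : mink 2 V₁.1 V₂.1 = -k := by
    have := cosh_hdist V₁ V₂; rw [h12] at this; linarith
  set t := Real.cosh (hdist C V₀) with ht
  have eC0 : mink 2 C.1 V₀.1 = -t := by
    have := cosh_hdist C V₀; linarith
  have eC1 : mink 2 C.1 V₁.1 = -t := by
    have := cosh_hdist C V₁; rw [← hC0] at this; linarith
  have eC2 : mink 2 C.1 V₂.1 = -t := by
    have := cosh_hdist C V₂; rw [← hC1, ← hC0] at this; linarith
  -- the four vectors are linearly dependent in ℝ³
  set v : Fin 4 → (Fin 3 → ℝ) := ![V₀.1, V₁.1, V₂.1, C.1] with hv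
  have hdep : ¬ LinearIndependent ℝ v := by
    intro h
    have := h.fintype_card_le_finrank
    rw [Module.finrank_fin_fun] at this
    simp at this
  obtain ⟨g, hg, i, hi⟩ := Fintype.not_linearIndependent_iff.mp hdep
  rw [Fin.sum_univ_four] at hg
  simp only [hv, Matrix.cons_val_zero, Matrix.cons_val_one, Matrix.head_cons,
    Matrix.cons_val_two, Matrix.tail_cons, Matrix.cons_val_three] at hg
  have hcomp : ∀ m : Fin 3,
      g 0 * V₀.1 m + g 1 * V₁.1 m + g 2 * V₂.1 m + g 3 * C.1 m = 0 := by
    intro m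
    have := congrFun hg m
    simpa [mul_comm] using this
  have E : ∀ X : Hyperboloid 2,
      g 0 * mink 2 X.1 V₀.1 + g 1 * mink 2 X.1 V₁.1 + g 2 * mink 2 X.1 V₂.1
        + g 3 * mink 2 X.1 C.1 = 0 := by
    intro X
    have h0 := hcomp 0; have h1 := hcomp 1; have h2 := hcomp 2
    simp only [mink_two]
    linear_combination (X.1 1) * h1 + (X.1 2) * h2 - (X.1 0) * h0
  have E0 := E V₀; have E1 := E V₁; have E2 := E V₂; have E3 := E C
  rw [V₀.2.1, e01, e02, mink_symm V₀.1 C.1, eC0] at E0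
  rw [mink_symm V₁.1 V₀.1, e01, V₁.2.1, e12, mink_symm V₁.1 C.1, eC1] at E1
  rw [mink_symm V₂.1 V₀.1, e02, mink_symm V₂.1 V₁.1, e12, V₂.2.1,
    mink_symm V₂.1 C.1, eC2] at E2
  rw [eC0, eC1, eC2, C.2.1] at E3
  have hg01 : g 0 = g 1 := by
    have h : (k - 1) * (g 1 - g 0) = 0 := by linear_combination E1 - E0
    rcases mul_eq_zero.mp h with h | h
    · linarith
    · linarith
  have hg02 : g 0 = g 2 := by
    have h : (k - 1) * (g 2 - g 0) = 0 := by linear_combination E2 - E0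
    rcases mul_eq_zero.mp h with h | h
    · linarith
    · linarith
  have hg3 : g 3 = -3 * t * g 0 := by
    have h := E3; rw [← hg01, ← hg02] at h; linarith
  have hg0 : g 0 ≠ 0 := by
    intro h0
    apply hi
    have h3 : g 3 = 0 := by rw [hg3, h0]; ring
    have h1 : g 1 = 0 := hg01 ▸ h0
    have h2 : g 2 = 0 := hg02 ▸ h0
    fin_cases i
    · exact h0
    · exact h1
    · exact h2
    · exact h3
  have key : t ^ 2 = (2 * k + 1) / 3 := by
    have h : g 0 * (3 * t ^ 2 - (2 * k + 1)) = 0 := by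
      linear_combination E0 - k * hg01 - k * hg02 + t * hg3
    rcases mul_eq_zero.mp h with h | h
    · exact absurd h hg0
    · linarith
  have f0 : Real.cosh (hdist V₀ C) = t := by
    have h := cosh_hdist V₀ C; rw [mink_symm, eC0] at h; linarith
  have f1 : Real.cosh (hdist V₁ C) = t := by
    have h := cosh_hdist V₁ C; rw [mink_symm, eC1] at h; linarith
  have f2 : Real.cosh (hdist V₂ C) = t := by
    have h := cosh_hdist V₂ C; rw [mink_symm, eC2] at h; linarith
  rw [f0, f1, f2]
  exact ⟨key, key, key⟩
end
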